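/- Let D be a digraph without digons missing a matching, and let C = a₁b₁,...,a_kb_k be a directed cycle of its dependency digraph. Then in D[K(C)], every vertex v satisfies |N^{++}(v)| = |N^+(v)| = |N^-(v)| = k−1; in particular every vertex of K(C) has the SNP in D[K(C)]. More precisely, N^{++}(a_i) = (N^-(a_i) ∪ {b_i}) \ {b_{i+1}} and N^{++}(b_i) = (N^-(b_i) ∪ {a_i}) \ {a_{i+1}} (with a_{k+1}=a₁, b_{k+1}=b₁ if k odd; a_{k+1}=b₁, b_{k+1}=a₁ if k even). -/

import Mathlib

variable {V : Type*}

/-- Out-neighborhood of `v`. -/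
def Nplus (A : V → V → Prop) (v : V) : Set V := {u | A v u}

/-- In-neighborhood of `v`. -/
def Nminus (A : V → V → Prop) (v : V) : Set V := {u | A u v}

/-- Second out-neighborhood: vertices at directed distance exactly 2 from `v`. -/
def Npp (A : V → V → Prop) (v : V) : Set V :=
  {u | u ≠ v ∧ ¬ A v u ∧ ∃ w, A v w ∧ A w u}

/-- The second neighborhood property. -/
def SNP (A : V → V → Prop) (v : V) : Prop := (Nplus A v).ncard ≤ (Npp A v).ncard

/-- A digraph (given by its arc relation) has no digons: no 2-cycles (this also rules out loops when stated for `u = v`). -/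
def NoDigons (A : V → V → Prop) : Prop := ∀ u v, ¬ (A u v ∧ A v u)

/-- A tournament: an orientation of a complete graph. -/
def IsTournament (A : V → V → Prop) : Prop :=
  (∀ v, ¬ A v v) ∧ ∀ u v : V, u ≠ v → (A u v ↔ ¬ A v u)

/-- `u v` is a missing edge: distinct and non-adjacent. -/
def MissingEdge (A : V → V → Prop) (u v : V) : Prop := u ≠ v ∧ ¬ A u v ∧ ¬ A v u

/-- `x₁y₁` loses to `x₂y₂` (with this labelling of endpoints). -/
def LosesAt (A : V → V → Prop) (x₁ y₁ x₂ y₂ : V) : Prop :=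
  A x₁ x₂ ∧ ¬ A x₁ y₂ ∧ y₂ ∉ Npp A x₁ ∧ A y₁ y₂ ∧ ¬ A y₁ x₂ ∧ x₂ ∉ Npp A y₁

/-- The losing relation between (unordered) missing edges: the arcs of the dependency digraph. -/
def EdgeLoses (A : V → V → Prop) (e e' : Sym2 V) : Prop :=
  ∃ x₁ y₁ x₂ y₂, e = s(x₁, y₁) ∧ e' = s(x₂, y₂) ∧
    MissingEdge A x₁ y₁ ∧ MissingEdge A x₂ y₂ ∧ LosesAt A x₁ y₁ x₂ y₂
/-- Out-neighborhood of `x` in the subdigraph induced on `K`. -/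
def NplusIn (A : V → V → Prop) (K : Set V) (x : V) : Set V := {u ∈ K | A x u}

/-- In-neighborhood of `x` in the subdigraph induced on `K`. -/
def NminusIn (A : V → V → Prop) (K : Set V) (x : V) : Set V := {u ∈ K | A u x}

/-- Second out-neighborhood of `x` in the subdigraph induced on `K`. -/
def NppIn (A : V → V → Prop) (K : Set V) (x : V) : Set V :=
  {u ∈ K | u ≠ x ∧ ¬ A x u ∧ ∃ w ∈ K, A x w ∧ A w u}

structure CycData (A : V → V → Prop) (k : ℕ) (c : ℕ → V) : Prop where
  two_le : 2 ≤ k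
  nd : ∀ u v, ¬ (A u v ∧ A v u)
  periodic : ∀ j, c (j + 2 * k) = c j
  inj : ∀ i j, c i = c j → i % (2 * k) = j % (2 * k)
  nonadj : ∀ j, ¬ A (c j) (c (j + k))
  adj : ∀ i j, i % (2*k) ≠ j % (2*k) → (i + k) % (2*k) ≠ j % (2*k) →
      A (c i) (c j) ∨ A (c j) (c i)
  beats : ∀ j, A (c j) (c (j + k + 1))
  nf : ∀ j, ¬ A (c j) (c (j + 1))
  nopath : ∀ j w, ¬ (A (c j) w ∧ A w (c (j + 1)))

namespace CycData

variable {A : V → V → Prop} {k : ℕ} {c : ℕ → V} (H : CycData A k c)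
include H

lemma npos : 0 < 2 * k := by have := H.two_le; omega

lemma cmod : ∀ i, c i = c (i % (2 * k)) := by
  intro i
  induction i using Nat.strong_induction_on with
  | _ i ih =>
    rcases lt_or_ge i (2*k) with h | h
    · rw [Nat.mod_eq_of_lt h]
    · have h1 : i = (i - 2*k) + 2*k := by omega
      rw [h1, H.periodic, ih (i - 2*k) (by have := H.npos; omega),
        Nat.add_mod_right]

lemma ccongr {i j : ℕ} (h : i % (2*k) = j % (2*k)) : c i = c j := by
  rw [H.cmod i, H.cmod j, h]

lemma cne {i j : ℕ} (h : i % (2*k) ≠ j % (2*k)) : c i ≠ c j :=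
  fun hc => h (H.inj i j hc)

lemma modne {j d : ℕ} (h0 : 0 < d) (h1 : d < 2*k) : (j + d) % (2*k) ≠ j % (2*k) := by
  intro h
  have h2 : j ≤ j + d := Nat.le_add_right _ _
  have := (Nat.modEq_iff_dvd' h2).mp (Nat.ModEq.symm h)
  simp only [Nat.add_sub_cancel_left] at this
  exact absurd (Nat.le_of_dvd h0 this) (by omega)

lemma noloop : ∀ v, ¬ A v v := fun v h => H.nd v v ⟨h, h⟩

lemma nonadj' : ∀ j, ¬ A (c (j + k)) (c j) := by
  intro j h
  have h2 : c (j + k + k) = c j := by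
    rw [show j + k + k = j + 2*k by ring, H.periodic]
  exact H.nonadj (j + k) (by rwa [h2])

end CycData

namespace CycData
set_option linter.unusedSectionVars false

variable {A : V → V → Prop} {k : ℕ} {c : ℕ → V} (H : CycData A k c)
include H

lemma step_subset (j : ℕ) :
    (NplusIn A (Set.range c) (c j) \ {c (j+k+1)}) ∪ {c j}
      ⊆ NplusIn A (Set.range c) (c (j+1)) := by
  rintro u (⟨⟨⟨m, rfl⟩, hadj⟩, hne⟩ | rfl)
  · refine ⟨⟨m, rfl⟩, ?_⟩
    have h1 : ¬ A (c m) (c (j+1)) := fun h => H.nopath j (c m) ⟨hadj, h⟩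
    have h2 : c m ≠ c (j+1) := by rintro h; rw [h] at hadj; exact H.nf j hadj
    have h3 : m % (2*k) ≠ (j+1) % (2*k) := fun h => h2 (H.ccongr h)
    have h4 : (m+k) % (2*k) ≠ (j+1) % (2*k) := by
      intro h
      apply hne
      have h5 : (m+k+k) % (2*k) = (j+1+k) % (2*k) := Nat.ModEq.add_right k h
      have h6 : c (m+k+k) = c (j+1+k) := H.ccongr h5
      rw [show m+k+k = m+2*k by ring, H.periodic, show j+1+k = j+k+1 by ring] at h6
      exact h6
    rcases H.adj m (j+1) h3 h4 with h | h
    · exact absurd h h1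
    · exact h
  · refine ⟨⟨j, rfl⟩, ?_⟩
    have h3 : (j+1) % (2*k) ≠ j % (2*k) := H.modne one_pos (by have := H.two_le; omega)
    have h4 : (j+1+k) % (2*k) ≠ j % (2*k) := by
      rw [show j+1+k = j+(k+1) by ring]
      exact H.modne (by omega) (by have := H.two_le; omega)
    rcases H.adj (j+1) j h3 h4 with h | h
    · exact h
    · exact absurd h (H.nf j)

lemma g_mem (j : ℕ) : c (j+k+1) ∈ NplusIn A (Set.range c) (c j) :=
  ⟨⟨_, rfl⟩, H.beats j⟩

lemma self_not_mem (j : ℕ) : c j ∉ NplusIn A (Set.range c) (c j) :=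
  fun h => H.noloop _ h.2

variable [Fintype V] [DecidableEq V]

lemma card_step_aux (j : ℕ) :
    ((NplusIn A (Set.range c) (c j) \ {c (j+k+1)}) ∪ {c j}).ncard
      = (NplusIn A (Set.range c) (c j)).ncard := by
  set S := NplusIn A (Set.range c) (c j) with hS
  have hg : c (j+k+1) ∈ S := H.g_mem j
  have hj : c j ∉ S \ {c (j+k+1)} := fun h => H.self_not_mem j h.1
  have h1 : 0 < S.ncard := (Set.ncard_pos S.toFinite).mpr ⟨_, hg⟩
  rw [Set.union_singleton, Set.ncard_insert_of_notMem hj S.toFinite.diff,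
    Set.ncard_diff_singleton_of_mem hg]
  omega

lemma s_mono (j : ℕ) : (NplusIn A (Set.range c) (c j)).ncard
    ≤ (NplusIn A (Set.range c) (c (j+1))).ncard := by
  rw [← H.card_step_aux j]
  exact Set.ncard_le_ncard (H.step_subset j) (Set.toFinite _)

lemma s_mono_d (j d : ℕ) : (NplusIn A (Set.range c) (c j)).ncard
    ≤ (NplusIn A (Set.range c) (c (j+d))).ncard := by
  induction d with
  | zero => rfl
  | succ d ih => exact le_trans ih (by rw [show j+(d+1) = (j+d)+1 by ring]; exact H.s_mono _)

lemma s_const (j : ℕ) : (NplusIn A (Set.range c) (c (j+1))).ncard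
    = (NplusIn A (Set.range c) (c j)).ncard := by
  have h1 := H.s_mono_d (j+1) (2*k - 1)
  have h2 : j + 1 + (2*k - 1) = j + 2*k := by have := H.two_le; omega
  rw [h2, H.periodic] at h1
  exact le_antisymm h1 (H.s_mono j)

lemma s_eq (j : ℕ) : (NplusIn A (Set.range c) (c j)).ncard
    = (NplusIn A (Set.range c) (c 0)).ncard := by
  induction j with
  | zero => rfl
  | succ j ih => rw [H.s_const j, ih]

lemma step_eq (j : ℕ) : NplusIn A (Set.range c) (c (j+1))
    = (NplusIn A (Set.range c) (c j) \ {c (j+k+1)}) ∪ {c j} := by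
  refine (Set.eq_of_subset_of_ncard_le (H.step_subset j) ?_ (Set.toFinite _)).symm
  rw [H.card_step_aux j, H.s_const j]

lemma range_eq : Set.range c = ↑((Finset.range (2*k)).image c) := by
  ext u
  simp only [Set.mem_range, Finset.coe_image, Set.mem_image, Finset.mem_coe,
    Finset.mem_range]
  constructor
  · rintro ⟨j, rfl⟩
    exact ⟨j % (2*k), Nat.mod_lt j H.npos, (H.cmod j).symm⟩
  · rintro ⟨j, _, rfl⟩
    exact ⟨j, rfl⟩

lemma card_KF : ((Finset.range (2*k)).image c).card = 2*k := by
  rw [Finset.card_image_of_injOn, Finset.card_range]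
  intro i hi j hj hij
  simp only [Finset.coe_range, Set.mem_Iio] at hi hj
  have := H.inj i j hij
  rwa [Nat.mod_eq_of_lt hi, Nat.mod_eq_of_lt hj] at this

lemma ncard_range : (Set.range c).ncard = 2*k := by
  rw [H.range_eq, Set.ncard_coe_finset, H.card_KF]

lemma partition (j : ℕ) :
    2*k = 2 + (NplusIn A (Set.range c) (c j)).ncard
      + (NminusIn A (Set.range c) (c j)).ncard := by
  set S := NplusIn A (Set.range c) (c j) with hS
  set T := NminusIn A (Set.range c) (c j) with hT
  have hST : Disjoint S T := by
    rw [Set.disjoint_left]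
    rintro u ⟨_, h1⟩ ⟨_, h2⟩
    exact H.nd _ _ ⟨h1, h2⟩
  have hpS : c (j+k) ∉ S := fun h => H.nonadj j h.2
  have hpT : c (j+k) ∉ T := fun h => H.nonadj' j h.2
  have hjS : c j ∉ S := H.self_not_mem j
  have hjT : c j ∉ T := fun h => H.noloop _ h.2
  have hjp : c j ≠ c (j+k) := by
    have : (j+k) % (2*k) ≠ j % (2*k) :=
      H.modne (by have := H.two_le; omega) (by have := H.two_le; omega)
    exact (H.cne this).symm
  have hcover : Set.range c = insert (c j) (insert (c (j+k)) (S ∪ T)) := by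
    ext u
    constructor
    · rintro ⟨m, rfl⟩
      by_cases e1 : c m = c j
      · exact Or.inl e1
      by_cases e2 : c m = c (j+k)
      · exact Or.inr (Or.inl e2)
      have h3 : m % (2*k) ≠ j % (2*k) := fun h => e1 (H.ccongr h)
      have h4 : (m+k) % (2*k) ≠ j % (2*k) := by
        intro h
        apply e2
        have h5 : (m+k+k) % (2*k) = (j+k) % (2*k) := Nat.ModEq.add_right k h
        have h6 : c (m+k+k) = c (j+k) := H.ccongr h5
        rwa [show m+k+k = m+2*k by ring, H.periodic] at h6
      rcases H.adj m j h3 h4 with h | h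
      · exact Or.inr (Or.inr (Or.inr ⟨⟨m, rfl⟩, h⟩))
      · exact Or.inr (Or.inr (Or.inl ⟨⟨m, rfl⟩, h⟩))
    · rintro (rfl | rfl | ⟨h, _⟩ | ⟨h, _⟩) <;> first | exact ⟨j, rfl⟩ | exact ⟨j+k, rfl⟩ | exact h
  have h1 : (S ∪ T).ncard = S.ncard + T.ncard :=
    Set.ncard_union_eq hST (Set.toFinite _) (Set.toFinite _)
  have h2 : c (j+k) ∉ S ∪ T := by rintro (h | h) <;> [exact hpS h; exact hpT h]
  have h3 : c j ∉ insert (c (j+k)) (S ∪ T) := by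
    rintro (h | h | h)
    · exact hjp h
    · exact hjS h
    · exact hjT h
  rw [← H.ncard_range, hcover,
    Set.ncard_insert_of_notMem h3 (Set.toFinite _),
    Set.ncard_insert_of_notMem h2 (Set.toFinite _), h1]
  ring

lemma s_val (j : ℕ) : (NplusIn A (Set.range c) (c j)).ncard = k - 1 := by
  classical
  set KF := (Finset.range (2*k)).image c with hKF
  have hmem : ∀ u, u ∈ KF ↔ u ∈ Set.range c := by
    intro u
    rw [H.range_eq, hKF]
    exact (Finset.mem_coe).symm
  have hout : ∀ v, (NplusIn A (Set.range c) v).ncard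
      = (KF.filter (fun u => A v u)).card := by
    intro v
    rw [← Set.ncard_coe_finset]
    congr 1
    ext u
    simp only [Finset.coe_filter, Set.mem_setOf_eq, NplusIn, hmem]
  have hin : ∀ v, (NminusIn A (Set.range c) v).ncard
      = (KF.filter (fun u => A u v)).card := by
    intro v
    rw [← Set.ncard_coe_finset]
    congr 1
    ext u
    simp only [Finset.coe_filter, Set.mem_setOf_eq, NminusIn, hmem]
  have hsum : ∑ v ∈ KF, (KF.filter (fun u => A v u)).card
      = ∑ u ∈ KF, (KF.filter (fun v => A v u)).card := by
    simp only [Finset.card_filter]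
    exact Finset.sum_comm
  set s0 := (NplusIn A (Set.range c) (c 0)).ncard with hs0
  have houtv : ∀ v ∈ KF, (KF.filter (fun u => A v u)).card = s0 := by
    intro v hv
    rcases Finset.mem_image.mp hv with ⟨i, _, rfl⟩
    rw [← hout, H.s_eq i]
  have hinv : ∀ u ∈ KF, (KF.filter (fun v => A v u)).card = 2*k - 2 - s0 := by
    intro u hu
    rcases Finset.mem_image.mp hu with ⟨i, _, rfl⟩
    rw [← hin]
    have h1 := H.partition i
    have h2 := H.s_eq i
    omega
  rw [Finset.sum_congr rfl houtv, Finset.sum_congr rfl hinv, Finset.sum_const,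
    Finset.sum_const, H.card_KF, smul_eq_mul, smul_eq_mul] at hsum
  have hc := Nat.eq_of_mul_eq_mul_left H.npos hsum
  have hp := H.partition 0
  rw [H.s_eq j]
  omega

lemma t_val (j : ℕ) : (NminusIn A (Set.range c) (c j)).ncard = k - 1 := by
  have h1 := H.partition j
  have h2 := H.s_val j
  omega

lemma partner_path (j : ℕ) :
    ∃ w ∈ Set.range c, A (c j) w ∧ A w (c (j+k)) := by
  by_contra hcon
  push_neg at hcon
  have hsub : NplusIn A (Set.range c) (c j) ⊆ NplusIn A (Set.range c) (c (j+k)) := by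
    rintro u ⟨⟨m, rfl⟩, ha⟩
    have h1 : ¬ A (c m) (c (j+k)) := hcon (c m) ⟨m, rfl⟩ ha
    have h2 : c m ≠ c (j+k) := by rintro h; rw [h] at ha; exact H.nonadj j ha
    have h3 : m % (2*k) ≠ (j+k) % (2*k) := fun h => h2 (H.ccongr h)
    have h4 : (m+k) % (2*k) ≠ (j+k) % (2*k) := by
      intro h
      have h5 : c (m+k+k) = c (j+k+k) := H.ccongr (Nat.ModEq.add_right k h)
      rw [show m+k+k = m+2*k by ring, show j+k+k = j+2*k by ring,
        H.periodic, H.periodic] at h5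
      rw [h5] at ha
      exact H.noloop _ ha
    rcases H.adj m (j+k) h3 h4 with h | h
    · exact absurd h h1
    · exact ⟨⟨m, rfl⟩, h⟩
  have heq : NplusIn A (Set.range c) (c j) = NplusIn A (Set.range c) (c (j+k)) := by
    refine Set.eq_of_subset_of_ncard_le hsub ?_ (Set.toFinite _)
    rw [H.s_val, H.s_val]
  have hg := H.g_mem j
  rw [heq] at hg
  exact H.nf (j+k) hg.2

lemma inpath (j m : ℕ) (ha : A (c m) (c j)) (hne : c m ≠ c (j+1)) :
    ∃ w ∈ Set.range c, A (c j) w ∧ A w (c m) := by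
  by_contra hcon
  push_neg at hcon
  have hcjSm : c j ∈ NplusIn A (Set.range c) (c m) := ⟨⟨j, rfl⟩, ha⟩
  have hsub : (NplusIn A (Set.range c) (c j) \ {c (m+k)}) ∪ {c j}
      ⊆ NplusIn A (Set.range c) (c m) := by
    rintro u (⟨⟨⟨i, rfl⟩, hai⟩, hni⟩ | rfl)
    · have h1 : ¬ A (c i) (c m) := hcon (c i) ⟨i, rfl⟩ hai
      have h2 : c i ≠ c m := by
        rintro h; rw [h] at hai; exact H.nd _ _ ⟨ha, hai⟩
      have h3 : i % (2*k) ≠ m % (2*k) := fun h => h2 (H.ccongr h)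
      have h4 : (i+k) % (2*k) ≠ m % (2*k) := by
        intro h
        apply hni
        have h5 : c (i+k+k) = c (m+k) := H.ccongr (Nat.ModEq.add_right k h)
        rwa [show i+k+k = i+2*k by ring, H.periodic] at h5
      rcases H.adj i m h3 h4 with h | h
      · exact absurd h h1
      · exact ⟨⟨i, rfl⟩, h⟩
    · exact hcjSm
  have hpm : c (m+k) ∈ NplusIn A (Set.range c) (c j) := by
    by_contra hpm
    have hLHS : (NplusIn A (Set.range c) (c j) \ {c (m+k)}) ∪ {c j}
        = insert (c j) (NplusIn A (Set.range c) (c j)) := by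
      rw [Set.diff_singleton_eq_self hpm, Set.union_singleton]
    have hcard := Set.ncard_le_ncard hsub (Set.toFinite _)
    rw [hLHS, Set.ncard_insert_of_notMem (H.self_not_mem j) (Set.toFinite _),
      H.s_val, H.s_val] at hcard
    omega
  have hcardL : ((NplusIn A (Set.range c) (c j) \ {c (m+k)}) ∪ {c j}).ncard = k - 1 := by
    have hj : c j ∉ NplusIn A (Set.range c) (c j) \ {c (m+k)} :=
      fun h => H.self_not_mem j h.1
    have h1 : 0 < (NplusIn A (Set.range c) (c j)).ncard := by
      rw [H.s_val]; have := H.two_le; omega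
    rw [Set.union_singleton, Set.ncard_insert_of_notMem hj (Set.toFinite _),
      Set.ncard_diff_singleton_of_mem hpm, H.s_val]
    have := H.two_le
    omega
  have heq1 : NplusIn A (Set.range c) (c m)
      = (NplusIn A (Set.range c) (c j) \ {c (m+k)}) ∪ {c j} := by
    refine (Set.eq_of_subset_of_ncard_le hsub ?_ (Set.toFinite _)).symm
    rw [hcardL, H.s_val]
  -- the predecessor of m
  set m' := m + (2*k - 1) with hm'
  have hm1 : m' + 1 = m + 2*k := by have := H.two_le; omega
  have hmk : m' + k + 1 = m + k + 2*k := by have := H.two_le; omega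
  have heq2 : NplusIn A (Set.range c) (c m)
      = (NplusIn A (Set.range c) (c m') \ {c (m+k)}) ∪ {c m'} := by
    have h0 := H.step_eq m'
    rw [hm1, H.periodic, hmk, H.periodic] at h0
    exact h0
  by_cases hz : c m' = c j
  · apply hne
    have h6 : (m' + 1) % (2*k) = (j + 1) % (2*k) := Nat.ModEq.add_right 1 (H.inj _ _ hz)
    have h7 : c (m' + 1) = c (j + 1) := H.ccongr h6
    rw [hm1, H.periodic] at h7
    exact h7
  · have hzSm : c m' ∈ NplusIn A (Set.range c) (c m) := by
      rw [heq2]; exact Or.inr rfl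
    have hzSj : A (c j) (c m') := by
      rw [heq1] at hzSm
      rcases hzSm with ⟨h, _⟩ | h
      · exact h.2
      · exact absurd h hz
    have hjSm' : A (c m') (c j) := by
      have h8 : c j ∈ (NplusIn A (Set.range c) (c m') \ {c (m+k)}) ∪ {c m'} := by
        rw [← heq2]; exact hcjSm
      rcases h8 with ⟨h, _⟩ | h
      · exact h.2
      · exact absurd h.symm hz
    exact H.nd _ _ ⟨hzSj, hjSm'⟩

lemma fprev (j : ℕ) : A (c (j+1)) (c j) := by
  have h3 : (j+1) % (2*k) ≠ j % (2*k) := H.modne one_pos (by have := H.two_le; omega)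
  have h4 : (j+1+k) % (2*k) ≠ j % (2*k) := by
    rw [show j+1+k = j+(k+1) by ring]
    exact H.modne (by omega) (by have := H.two_le; omega)
  rcases H.adj (j+1) j h3 h4 with h | h
  · exact h
  · exact absurd h (H.nf j)

lemma npp_char (j : ℕ) : NppIn A (Set.range c) (c j)
    = (NminusIn A (Set.range c) (c j) ∪ {c (j+k)}) \ {c (j+1)} := by
  ext u
  constructor
  · rintro ⟨⟨m, rfl⟩, hne, hna, w, hw, h1, h2⟩
    refine ⟨?_, ?_⟩
    · by_cases hp : c m = c (j+k)
      · exact Or.inr hp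
      have h3 : m % (2*k) ≠ j % (2*k) := fun h => hne (H.ccongr h)
      have h4 : (m+k) % (2*k) ≠ j % (2*k) := by
        intro h
        apply hp
        have h5 : c (m+k+k) = c (j+k) := H.ccongr (Nat.ModEq.add_right k h)
        rwa [show m+k+k = m+2*k by ring, H.periodic] at h5
      rcases H.adj m j h3 h4 with h | h
      · exact Or.inl ⟨⟨m, rfl⟩, h⟩
      · exact absurd h hna
    · rintro h
      rw [Set.mem_singleton_iff] at h
      rw [h] at h2
      exact H.nopath j w ⟨h1, h2⟩
  · rintro ⟨hT | hp, hne⟩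
    · obtain ⟨⟨m, rfl⟩, ha⟩ := hT
      rw [Set.mem_singleton_iff] at hne
      refine ⟨⟨m, rfl⟩, ?_, ?_, ?_⟩
      · rintro h; rw [h] at ha; exact H.noloop _ ha
      · intro h; exact H.nd _ _ ⟨h, ha⟩
      · exact H.inpath j m ha hne
    · rw [Set.mem_singleton_iff] at hp
      subst hp
      refine ⟨⟨j+k, rfl⟩, ?_, H.nonadj j, H.partner_path j⟩
      exact H.cne (H.modne (by have := H.two_le; omega) (by have := H.two_le; omega))

lemma npp_card (j : ℕ) : (NppIn A (Set.range c) (c j)).ncard = k - 1 := by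
  rw [H.npp_char j]
  have hx : c (j+k) ∉ NminusIn A (Set.range c) (c j) := fun h => H.nonadj' j h.2
  have hy : c (j+1) ∈ NminusIn A (Set.range c) (c j) ∪ {c (j+k)} :=
    Or.inl ⟨⟨j+1, rfl⟩, H.fprev j⟩
  rw [Set.ncard_diff_singleton_of_mem hy, Set.union_singleton,
    Set.ncard_insert_of_notMem hx (Set.toFinite _), H.t_val]
  have := H.two_le
  omega

end CycData

/-- in `D[K(C)]` for a losing cycle `a₁b₁,…,a_kb_k` (0-indexed:
`a 0 = a₁,…,a (k-1) = a_k`), every vertex `v` has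
`|N⁺⁺(v)| = |N⁺(v)| = |N⁻(v)| = k-1` (so it has the SNP in `D[K(C)]`), and
`N⁺⁺(a_i) = (N⁻(a_i) ∪ {b_i}) \ {b_{i+1}}`,
`N⁺⁺(b_i) = (N⁻(b_i) ∪ {a_i}) \ {a_{i+1}}`, where `a_{k+1} = a₁, b_{k+1} = b₁`
if `k` is odd and `a_{k+1} = b₁, b_{k+1} = a₁` if `k` is even. -/
theorem losing_cycle_second_neighborhoods [Fintype V]
    (A : V → V → Prop) (hA : NoDigons A)
    (hMatching : ∀ v x y : V, MissingEdge A v x → MissingEdge A v y → x = y)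
    (k : ℕ) (hk : 0 < k) (a b : ℕ → V)
    (hmiss : ∀ i < k, MissingEdge A (a i) (b i))
    (hdist : ∀ i < k, ∀ j < k, i ≠ j → s(a i, b i) ≠ s(a j, b j))
    (hpath : ∀ i, i + 1 < k → LosesAt A (a i) (b i) (a (i + 1)) (b (i + 1)))
    (hcloseOdd : Odd k → LosesAt A (a (k - 1)) (b (k - 1)) (a 0) (b 0))
    (hcloseEven : Even k → LosesAt A (a (k - 1)) (b (k - 1)) (b 0) (a 0))
    (K : Set V) (hK : K = {v | ∃ i < k, v = a i ∨ v = b i}) :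
    (∀ i < k,
      NppIn A K (a i) =
        (NminusIn A K (a i) ∪ {b i}) \
          {if i + 1 < k then b (i + 1) else if Odd k then b 0 else a 0} ∧
      NppIn A K (b i) =
        (NminusIn A K (b i) ∪ {a i}) \
          {if i + 1 < k then a (i + 1) else if Odd k then a 0 else b 0}) ∧
    (∀ v ∈ K, (NppIn A K v).ncard = k - 1 ∧ (NplusIn A K v).ncard = k - 1 ∧
      (NminusIn A K v).ncard = k - 1 ∧ (NplusIn A K v).ncard ≤ (NppIn A K v).ncard) := by
    classical
  by_cases hk1 : k = 1
  · exfalso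
    subst hk1
    have h := hcloseOdd ⟨0, by norm_num⟩
    norm_num at h
    exact hA _ _ ⟨h.1, h.1⟩
  have hk2 : 2 ≤ k := by omega
  have hsymmME : ∀ u v, MissingEdge A u v → MissingEdge A v u :=
    fun u v ⟨h1, h2, h3⟩ => ⟨h1.symm, h3, h2⟩
  have hD1 : ∀ i, i < k → a i ≠ b i := fun i hi => (hmiss i hi).1
  have hD2 : ∀ i, i < k → ∀ j, j < k → a i = a j → i = j := by
    intro i hi j hj heq
    by_contra hne
    have m1 := hmiss i hi
    rw [heq] at m1
    have hb : b i = b j := hMatching (a j) (b i) (b j) m1 (hmiss j hj)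
    exact hdist i hi j hj hne (by rw [heq, hb])
  have hD3 : ∀ i, i < k → ∀ j, j < k → b i = b j → i = j := by
    intro i hi j hj heq
    by_contra hne
    have m1 := hsymmME _ _ (hmiss i hi)
    rw [heq] at m1
    have hb : a i = a j := hMatching (b j) (a i) (a j) m1 (hsymmME _ _ (hmiss j hj))
    exact hdist i hi j hj hne (by rw [heq, hb])
  have hD4 : ∀ i, i < k → ∀ j, j < k → a i ≠ b j := by
    intro i hi j hj heq
    have m2 := hsymmME _ _ (hmiss j hj)
    rw [← heq] at m2
    have hb : b i = a j := hMatching (a i) (b i) (a j) (hmiss i hi) m2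
    by_cases hij : i = j
    · subst hij; exact hD1 i hi heq
    · exact hdist i hi j hj hij (by rw [heq, hb]; exact Sym2.eq_swap)
  set c : ℕ → V := fun j =>
    if j % (2*k) < k then (if (j % (2*k)) % 2 = 0 then a (j % (2*k)) else b (j % (2*k)))
    else (if (j % (2*k) - k) % 2 = 0 then b (j % (2*k) - k) else a (j % (2*k) - k))
    with hc
  have hper : ∀ j, c (j + 2*k) = c j := by
    intro j; simp only [hc]; rw [Nat.add_mod_right]
  have hcm : ∀ j, c j = c (j % (2*k)) := by
    intro j; simp only [hc]; rw [Nat.mod_mod_of_dvd _ dvd_rfl]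
  have hcongr : ∀ i j, i % (2*k) = j % (2*k) → c i = c j := by
    intro i j h; rw [hcm i, hcm j, h]
  have hshape : ∀ q, q < 2*k →
      (q < k ∧ q % 2 = 0 ∧ c q = a q) ∨ (q < k ∧ q % 2 = 1 ∧ c q = b q) ∨
      (k ≤ q ∧ (q-k) % 2 = 0 ∧ c q = b (q-k)) ∨ (k ≤ q ∧ (q-k) % 2 = 1 ∧ c q = a (q-k)) := by
    intro q hq
    have hqm : q % (2*k) = q := Nat.mod_eq_of_lt hq
    by_cases h1 : q < k
    · by_cases h2 : q % 2 = 0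
      · exact Or.inl ⟨h1, h2, by simp only [hc, hqm]; rw [if_pos h1, if_pos h2]⟩
      · exact Or.inr (Or.inl ⟨h1, by omega, by simp only [hc, hqm]; rw [if_pos h1, if_neg h2]⟩)
    · by_cases h2 : (q-k) % 2 = 0
      · exact Or.inr (Or.inr (Or.inl ⟨by omega, h2,
          by simp only [hc, hqm]; rw [if_neg h1, if_pos h2]⟩))
      · exact Or.inr (Or.inr (Or.inr ⟨by omega, by omega,
          by simp only [hc, hqm]; rw [if_neg h1, if_neg h2]⟩))
  have hinj : ∀ i j, c i = c j → i % (2*k) = j % (2*k) := by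
    intro i j heq0
    rw [hcm i, hcm j] at heq0
    have hq : i % (2*k) < 2*k := Nat.mod_lt _ (by omega)
    have hr : j % (2*k) < 2*k := Nat.mod_lt _ (by omega)
    rcases hshape _ hq with ⟨hq1,hq2,hq3⟩|⟨hq1,hq2,hq3⟩|⟨hq1,hq2,hq3⟩|⟨hq1,hq2,hq3⟩ <;>
      rcases hshape _ hr with ⟨hr1,hr2,hr3⟩|⟨hr1,hr2,hr3⟩|⟨hr1,hr2,hr3⟩|⟨hr1,hr2,hr3⟩ <;>
      rw [hq3, hr3] at heq0 <;>
      first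
      | exact absurd heq0 (hD4 _ (by omega) _ (by omega))
      | exact absurd heq0.symm (hD4 _ (by omega) _ (by omega))
      | (have h5 := hD2 _ (by omega) _ (by omega) heq0; omega)
      | (have h5 := hD3 _ (by omega) _ (by omega) heq0; omega)
  have hAB : ∀ q, q < k → (c q = if q % 2 = 0 then a q else b q) ∧
      (c (q+k) = if q % 2 = 0 then b q else a q) := by
    intro q hq
    constructor
    · have hqm : q % (2*k) = q := Nat.mod_eq_of_lt (by omega)
      simp only [hc, hqm]
      rw [if_pos hq]
    · have hqm : (q+k) % (2*k) = q+k := Nat.mod_eq_of_lt (by omega)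
      simp only [hc, hqm]
      rw [if_neg (by omega : ¬ q + k < k)]
      have he : q + k - k = q := by omega
      rw [he]
  have hpair : ∀ j, ∃ i, i < k ∧
      ((c j = a i ∧ c (j+k) = b i) ∨ (c j = b i ∧ c (j+k) = a i)) := by
    intro j
    have hq : j % (2*k) < 2*k := Nat.mod_lt _ (by omega)
    have hjq : j % (2*k) = (j % (2*k)) % (2*k) := (Nat.mod_mod_of_dvd j dvd_rfl).symm
    have e1 : c j = c (j % (2*k)) := hcm j
    have e2 : c (j+k) = c (j % (2*k) + k) := hcongr _ _ (Nat.ModEq.add_right k hjq)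
    set q := j % (2*k) with hqdef
    by_cases h1 : q < k
    · obtain ⟨f1, f2⟩ := hAB q h1
      by_cases h2 : q % 2 = 0
      · exact ⟨q, h1, Or.inl ⟨by rw [e1, f1, if_pos h2], by rw [e2, f2, if_pos h2]⟩⟩
      · exact ⟨q, h1, Or.inr ⟨by rw [e1, f1, if_neg h2], by rw [e2, f2, if_neg h2]⟩⟩
    · have htk : q - k < k := by omega
      obtain ⟨f1, f2⟩ := hAB (q-k) htk
      have e3 : c q = c (q-k+k) := by congr 1; omega
      have e4 : c (q+k) = c (q-k) := by
        have he : q + k = (q-k) + 2*k := by omega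
        rw [he, hper]
      by_cases h2 : (q-k) % 2 = 0
      · exact ⟨q-k, htk, Or.inr ⟨by rw [e1, e3, f2, if_pos h2], by rw [e2, e4, f1, if_pos h2]⟩⟩
      · exact ⟨q-k, htk, Or.inl ⟨by rw [e1, e3, f2, if_neg h2], by rw [e2, e4, f1, if_neg h2]⟩⟩
  have hnonadj : ∀ j, ¬ A (c j) (c (j+k)) := by
    intro j hadj
    obtain ⟨i, hi, hcase⟩ := hpair j
    rcases hcase with ⟨e1, e2⟩ | ⟨e1, e2⟩
    · rw [e1, e2] at hadj; exact (hmiss i hi).2.1 hadj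
    · rw [e1, e2] at hadj; exact (hmiss i hi).2.2 hadj
  have hadjf : ∀ i j, i % (2*k) ≠ j % (2*k) → (i + k) % (2*k) ≠ j % (2*k) →
      A (c i) (c j) ∨ A (c j) (c i) := by
    intro i j h1 h2
    by_contra hcon
    push_neg at hcon
    have hne : c i ≠ c j := fun h => h1 (hinj _ _ h)
    have m1 : MissingEdge A (c i) (c j) := ⟨hne, hcon.1, hcon.2⟩
    obtain ⟨t, ht, hcase⟩ := hpair i
    have m2 : MissingEdge A (c i) (c (i+k)) := by
      rcases hcase with ⟨e1, e2⟩ | ⟨e1, e2⟩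
      · rw [e1, e2]; exact hmiss t ht
      · rw [e1, e2]; exact hsymmME _ _ (hmiss t ht)
    have h3 := hMatching _ _ _ m1 m2
    exact h2 ((hinj _ _ h3).symm)
  have hnpp : ∀ x y : V, y ∉ Npp A x → y ≠ x → ¬ A x y → ∀ w, ¬ (A x w ∧ A w y) :=
    fun x y h3 hne hna w hw => h3 ⟨hne, hna, w, hw.1, hw.2⟩
  have hstep : ∀ j, A (c j) (c (j+k+1)) ∧ ¬ A (c j) (c (j+1)) ∧
      ∀ w, ¬ (A (c j) w ∧ A w (c (j+1))) := by
    intro j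
    have hq : j % (2*k) < 2*k := Nat.mod_lt _ (by omega)
    have hjq : j % (2*k) = (j % (2*k)) % (2*k) := (Nat.mod_mod_of_dvd j dvd_rfl).symm
    have e0 : c j = c (j % (2*k)) := hcm j
    have e1 : c (j+1) = c (j % (2*k) + 1) := hcongr _ _ (Nat.ModEq.add_right 1 hjq)
    have e2 : c (j+k+1) = c (j % (2*k) + k + 1) := by
      rw [show j+k+1 = j+(k+1) by ring, show j % (2*k) + k + 1 = j % (2*k) + (k+1) by ring]
      exact hcongr _ _ (Nat.ModEq.add_right (k+1) hjq)
    rw [e0, e1, e2]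
    set q := j % (2*k) with hqdef
    clear_value q
    clear e0 e1 e2 hjq hqdef
    by_cases hA1 : q < k - 1
    · have f1 := hAB (q+1) (by omega)
      by_cases h2 : q % 2 = 0
      · have g0 : c q = a q := by rw [(hAB q (by omega)).1, if_pos h2]
        have g1 : c (q+1) = b (q+1) := by rw [f1.1, if_neg (by omega)]
        have g2 : c (q+k+1) = a (q+1) := by
          rw [show q+k+1 = (q+1)+k by ring, f1.2, if_neg (by omega)]
        obtain ⟨l1, l2, l3, l4, l5, l6⟩ := hpath q (by omega)
        rw [g0, g1, g2]
        exact ⟨l1, l2, hnpp _ _ l3 (Ne.symm (hD4 q (by omega) (q+1) (by omega))) l2⟩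
      · have g0 : c q = b q := by rw [(hAB q (by omega)).1, if_neg h2]
        have g1 : c (q+1) = a (q+1) := by rw [f1.1, if_pos (by omega)]
        have g2 : c (q+k+1) = b (q+1) := by
          rw [show q+k+1 = (q+1)+k by ring, f1.2, if_pos (by omega)]
        obtain ⟨l1, l2, l3, l4, l5, l6⟩ := hpath q (by omega)
        rw [g0, g1, g2]
        exact ⟨l4, l5, hnpp _ _ l6 (hD4 (q+1) (by omega) q (by omega)) l5⟩
    · by_cases hB : q = k - 1
      · have g1 : c (q+1) = b 0 := by
          rw [show q+1 = 0+k by omega, (hAB 0 (by omega)).2, if_pos (by norm_num)]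
        have g2 : c (q+k+1) = a 0 := by
          rw [show q+k+1 = 0+2*k by omega, hper, (hAB 0 (by omega)).1, if_pos (by norm_num)]
        by_cases h2 : q % 2 = 0
        · have hkodd : Odd k := by rw [Nat.odd_iff]; omega
          have g0 : c q = a (k-1) := by
            rw [show q = k-1 from hB, (hAB (k-1) (by omega)).1, if_pos (by omega)]
          obtain ⟨l1, l2, l3, l4, l5, l6⟩ := hcloseOdd hkodd
          rw [g0, g1, g2]
          exact ⟨l1, l2, hnpp _ _ l3 (Ne.symm (hD4 (k-1) (by omega) 0 (by omega))) l2⟩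
        · have hkeven : Even k := by rw [Nat.even_iff]; omega
          have g0 : c q = b (k-1) := by
            rw [show q = k-1 from hB, (hAB (k-1) (by omega)).1, if_neg (by omega)]
          obtain ⟨l1, l2, l3, l4, l5, l6⟩ := hcloseEven hkeven
          rw [g0, g1, g2]
          refine ⟨l4, l5, hnpp _ _ l6 ?_ l5⟩
          intro h
          have := hD3 0 (by omega) (k-1) (by omega) h
          omega
      · have hC : k ≤ q := by omega
        by_cases hC1 : q - k < k - 1
        · set t := q - k with htdef
          have f0 := hAB t (by omega)
          have f1 := hAB (t+1) (by omega)
          have e3 : c q = c (t+k) := by congr 1; omega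
          have e4 : c (q+1) = c ((t+1)+k) := by congr 1; omega
          have e5 : c (q+k+1) = c (t+1) := by rw [show q+k+1 = (t+1)+2*k by omega, hper]
          by_cases h2 : t % 2 = 0
          · have g0 : c q = b t := by rw [e3, f0.2, if_pos h2]
            have g1 : c (q+1) = a (t+1) := by rw [e4, f1.2, if_neg (by omega)]
            have g2 : c (q+k+1) = b (t+1) := by rw [e5, f1.1, if_neg (by omega)]
            obtain ⟨l1, l2, l3, l4, l5, l6⟩ := hpath t (by omega)
            rw [g0, g1, g2]
            exact ⟨l4, l5, hnpp _ _ l6 (hD4 (t+1) (by omega) t (by omega)) l5⟩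
          · have g0 : c q = a t := by rw [e3, f0.2, if_neg h2]
            have g1 : c (q+1) = b (t+1) := by rw [e4, f1.2, if_pos (by omega)]
            have g2 : c (q+k+1) = a (t+1) := by rw [e5, f1.1, if_pos (by omega)]
            obtain ⟨l1, l2, l3, l4, l5, l6⟩ := hpath t (by omega)
            rw [g0, g1, g2]
            exact ⟨l1, l2, hnpp _ _ l3 (Ne.symm (hD4 t (by omega) (t+1) (by omega))) l2⟩
        · have hD' : q = 2*k - 1 := by omega
          have g1 : c (q+1) = a 0 := by
            rw [show q+1 = 0+2*k by omega, hper, (hAB 0 (by omega)).1, if_pos (by norm_num)]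
          have g2 : c (q+k+1) = b 0 := by
            rw [show q+k+1 = (0+k)+2*k by omega, hper, (hAB 0 (by omega)).2,
              if_pos (by norm_num)]
          by_cases h2 : (q-k) % 2 = 0
          · have hkodd : Odd k := by rw [Nat.odd_iff]; omega
            have g0 : c q = b (k-1) := by
              rw [show q = (k-1)+k by omega, (hAB (k-1) (by omega)).2, if_pos (by omega)]
            obtain ⟨l1, l2, l3, l4, l5, l6⟩ := hcloseOdd hkodd
            rw [g0, g1, g2]
            exact ⟨l4, l5, hnpp _ _ l6 (hD4 0 (by omega) (k-1) (by omega)) l5⟩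
          · have hkeven : Even k := by rw [Nat.even_iff]; omega
            have g0 : c q = a (k-1) := by
              rw [show q = (k-1)+k by omega, (hAB (k-1) (by omega)).2, if_neg (by omega)]
            obtain ⟨l1, l2, l3, l4, l5, l6⟩ := hcloseEven hkeven
            rw [g0, g1, g2]
            refine ⟨l1, l2, hnpp _ _ l3 ?_ l2⟩
            intro h
            have := hD2 0 (by omega) (k-1) (by omega) h
            omega
  have H : CycData A k c :=
    ⟨hk2, hA, hper, hinj, hnonadj, hadjf,
      fun j => (hstep j).1, fun j => (hstep j).2.1, fun j => (hstep j).2.2⟩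
  have hKrange : K = Set.range c := by
    rw [hK]
    ext v
    simp only [Set.mem_setOf_eq, Set.mem_range]
    constructor
    · rintro ⟨i, hi, rfl | rfl⟩
      · by_cases h2 : i % 2 = 0
        · exact ⟨i, by rw [(hAB i hi).1, if_pos h2]⟩
        · exact ⟨i+k, by rw [(hAB i hi).2, if_neg h2]⟩
      · by_cases h2 : i % 2 = 0
        · exact ⟨i+k, by rw [(hAB i hi).2, if_pos h2]⟩
        · exact ⟨i, by rw [(hAB i hi).1, if_neg h2]⟩
    · rintro ⟨m, rfl⟩
      obtain ⟨i, hi, hcase⟩ := hpair m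
      rcases hcase with ⟨e1, _⟩ | ⟨e1, _⟩
      · exact ⟨i, hi, Or.inl e1⟩
      · exact ⟨i, hi, Or.inr e1⟩
  have hja : ∀ i, i < k → ∃ j, c j = a i ∧ c (j+k) = b i ∧
      c (j+1) = (if i + 1 < k then b (i+1) else if Odd k then b 0 else a 0) := by
    intro i hi
    obtain ⟨f1, f2⟩ := hAB i hi
    by_cases h2 : i % 2 = 0
    · refine ⟨i, by rw [f1, if_pos h2], by rw [f2, if_pos h2], ?_⟩
      by_cases h3 : i + 1 < k
      · rw [if_pos h3, (hAB (i+1) h3).1, if_neg (by omega)]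
      · have hkodd : Odd k := by rw [Nat.odd_iff]; omega
        rw [if_neg h3, if_pos hkodd, show i+1 = 0+k by omega, (hAB 0 (by omega)).2,
          if_pos (by norm_num)]
    · refine ⟨i+k, by rw [f2, if_neg h2], ?_, ?_⟩
      · rw [show i+k+k = i+2*k by ring, hper, f1, if_neg h2]
      · by_cases h3 : i + 1 < k
        · rw [if_pos h3, show i+k+1 = (i+1)+k by ring, (hAB (i+1) h3).2, if_pos (by omega)]
        · have hkeven : ¬ Odd k := by rw [Nat.odd_iff]; omega
          rw [if_neg h3, if_neg hkeven, show i+k+1 = 0+2*k by omega, hper,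
            (hAB 0 (by omega)).1, if_pos (by norm_num)]
  have hjb : ∀ i, i < k → ∃ j, c j = b i ∧ c (j+k) = a i ∧
      c (j+1) = (if i + 1 < k then a (i+1) else if Odd k then a 0 else b 0) := by
    intro i hi
    obtain ⟨f1, f2⟩ := hAB i hi
    by_cases h2 : i % 2 = 0
    · refine ⟨i+k, by rw [f2, if_pos h2], ?_, ?_⟩
      · rw [show i+k+k = i+2*k by ring, hper, f1, if_pos h2]
      · by_cases h3 : i + 1 < k
        · rw [if_pos h3, show i+k+1 = (i+1)+k by ring, (hAB (i+1) h3).2, if_neg (by omega)]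
        · have hkodd : Odd k := by rw [Nat.odd_iff]; omega
          rw [if_neg h3, if_pos hkodd, show i+k+1 = 0+2*k by omega, hper,
            (hAB 0 (by omega)).1, if_pos (by norm_num)]
    · refine ⟨i, by rw [f1, if_neg h2], by rw [f2, if_neg h2], ?_⟩
      by_cases h3 : i + 1 < k
      · rw [if_pos h3, (hAB (i+1) h3).1, if_pos (by omega)]
      · have hkeven : ¬ Odd k := by rw [Nat.odd_iff]; omega
        rw [if_neg h3, if_neg hkeven, show i+1 = 0+k by omega, (hAB 0 (by omega)).2,
          if_pos (by norm_num)]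
  constructor
  · intro i hi
    obtain ⟨j, g1, g2, g3⟩ := hja i hi
    obtain ⟨j', g1', g2', g3'⟩ := hjb i hi
    constructor
    · rw [hKrange, ← g1, ← g2, ← g3]
      exact H.npp_char j
    · rw [hKrange, ← g1', ← g2', ← g3']
      exact H.npp_char j'
  · intro v hv
    rw [hKrange] at hv
    obtain ⟨m, rfl⟩ := hv
    rw [hKrange]
    refine ⟨H.npp_card m, H.s_val m, H.t_val m, ?_⟩
    rw [H.npp_card m, H.s_val m]
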